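/- For any numerical semigroup Λ different from ℕ with conductor c and genus g, setting k = 2c - g - 2, the ν sequence satisfies ν_k = ν_{k+1} (in fact both equal k - g + 2). -/

import Mathlib

structure NumericalSemigroup where
  carrier : Set ℕ
  zero_mem : 0 ∈ carrier
  add_mem : ∀ {a b : ℕ}, a ∈ carrier → b ∈ carrier → a + b ∈ carrier
  finite_compl : Set.Finite carrierᶜ

namespace NumericalSemigroup

/-- The genus: the number of gaps. -/
noncomputable def genus (Λ : NumericalSemigroup) : ℕ := Λ.carrierᶜ.ncard

/-- The conductor: the smallest `c` with `c + ℕ ⊆ Λ`. -/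
noncomputable def conductor (Λ : NumericalSemigroup) : ℕ := sInf {c : ℕ | ∀ n, c ≤ n → n ∈ Λ.carrier}

/-- `f` is the (unique) increasing enumeration of `Λ`. -/
noncomputable def IsEnum (Λ : NumericalSemigroup) (f : ℕ → ℕ) : Prop :=
  StrictMono f ∧ Set.range f = Λ.carrier

/-- The Arf property: `λ_i + λ_j - λ_k ∈ Λ` for all `i ≥ j ≥ k`. -/
noncomputable def IsArf (Λ : NumericalSemigroup) : Prop :=
  ∀ f : ℕ → ℕ, Λ.IsEnum f → ∀ i j k : ℕ, k ≤ j → j ≤ i → f i + f j - f k ∈ Λ.carrier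

end NumericalSemigroup

/-- `ν_i = #{j : λ_i - λ_j ∈ Λ}`, for `f` the enumeration of `Λ`. -/
noncomputable def NumericalSemigroup.nu (Λ : NumericalSemigroup) (f : ℕ → ℕ) (i : ℕ) : ℕ :=
  {j : ℕ | j ≤ i ∧ f i - f j ∈ Λ.carrier}.ncard


namespace NumericalSemigroup

lemma conductor_spec (Λ : NumericalSemigroup) : ∀ n, Λ.conductor ≤ n → n ∈ Λ.carrier := by
  have hne : {c : ℕ | ∀ n, c ≤ n → n ∈ Λ.carrier}.Nonempty := by
    obtain ⟨N, hN⟩ := Λ.finite_compl.bddAbove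
    refine ⟨N + 1, fun n hn => ?_⟩
    by_contra h
    exact absurd (hN h) (by omega)
  exact Nat.sInf_mem hne

lemma two_le_conductor (Λ : NumericalSemigroup) (hnt : Λ.carrier ≠ Set.univ) :
    2 ≤ Λ.conductor := by
  by_contra h
  apply hnt
  ext n
  simp only [Set.mem_univ, iff_true]
  rcases Nat.eq_zero_or_pos n with h0 | h1
  · exact h0 ▸ Λ.zero_mem
  · exact Λ.conductor_spec n (by omega)

lemma pred_not_mem (Λ : NumericalSemigroup) (hnt : Λ.carrier ≠ Set.univ) :
    Λ.conductor - 1 ∉ Λ.carrier := by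
  have h2 := Λ.two_le_conductor hnt
  have hlt : Λ.conductor - 1 < sInf {c : ℕ | ∀ n, c ≤ n → n ∈ Λ.carrier} := by
    show _ < Λ.conductor; omega
  have hmem := Nat.notMem_of_lt_sInf hlt
  simp only [Set.mem_setOf_eq, not_forall] at hmem
  obtain ⟨n, hn, hnc⟩ := hmem
  have : n < Λ.conductor := by
    by_contra h
    exact hnc (Λ.conductor_spec n (by omega))
  have : n = Λ.conductor - 1 := by omega
  exact this ▸ hnc

lemma gap_lt (Λ : NumericalSemigroup) {x : ℕ} (hx : x ∉ Λ.carrier) : x < Λ.conductor := by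
  by_contra h
  exact hx (Λ.conductor_spec x (by omega))

lemma one_le_genus (Λ : NumericalSemigroup) (hnt : Λ.carrier ≠ Set.univ) : 1 ≤ Λ.genus := by
  have h : Λ.carrierᶜ.Nonempty := ⟨Λ.conductor - 1, Λ.pred_not_mem hnt⟩
  have h2 := (Set.ncard_pos Λ.finite_compl).mpr h
  show 1 ≤ Λ.carrierᶜ.ncard
  omega

lemma card_inter (Λ : NumericalSemigroup) {f : ℕ → ℕ} (hf : Λ.IsEnum f) (i : ℕ) :
    (Λ.carrier ∩ Set.Iic (f i)).ncard = i + 1 := by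
  have himg : Λ.carrier ∩ Set.Iic (f i) = f '' Set.Iic i := by
    ext s
    constructor
    · rintro ⟨hs, hle⟩
      rw [← hf.2] at hs
      obtain ⟨j, rfl⟩ := hs
      exact ⟨j, (hf.1.le_iff_le).mp hle, rfl⟩
    · rintro ⟨j, hj, rfl⟩
      exact ⟨hf.2 ▸ Set.mem_range_self j, hf.1.monotone hj⟩
  rw [himg, Set.ncard_image_of_injOn (hf.1.injective.injOn)]
  have h3 : (Set.Iic i) = ↑(Finset.Iic i) := by simp
  rw [h3, Set.ncard_coe_finset, Nat.card_Iic]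

lemma index_eq (Λ : NumericalSemigroup) {f : ℕ → ℕ} (hf : Λ.IsEnum f) (i : ℕ)
    (hc : Λ.conductor ≤ f i) : f i = i + Λ.genus := by
  have hsplit : Set.Iic (f i) = (Λ.carrier ∩ Set.Iic (f i)) ∪ (Λ.carrierᶜ ∩ Set.Iic (f i)) := by
    ext x; by_cases hx : x ∈ Λ.carrier <;> simp [hx]
  have hcompl : Λ.carrierᶜ ∩ Set.Iic (f i) = Λ.carrierᶜ := by
    apply Set.inter_eq_left.mpr
    intro x hx
    have := Λ.gap_lt hx
    simp only [Set.mem_Iic]; omega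
  have hdisj : Disjoint (Λ.carrier ∩ Set.Iic (f i)) (Λ.carrierᶜ ∩ Set.Iic (f i)) := by
    apply Set.disjoint_left.mpr
    rintro x ⟨hx, -⟩ ⟨hx', -⟩
    exact hx' hx
  have hfin1 : (Λ.carrier ∩ Set.Iic (f i)).Finite := (Set.finite_Iic _).subset Set.inter_subset_right
  have hfin2 : (Λ.carrierᶜ ∩ Set.Iic (f i)).Finite := Λ.finite_compl.subset Set.inter_subset_left
  have hcard := Set.ncard_union_eq hdisj hfin1 hfin2
  rw [← hsplit] at hcard
  have hIic : (Set.Iic (f i)).ncard = f i + 1 := by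
    have h3 : (Set.Iic (f i)) = ↑(Finset.Iic (f i)) := by simp
    rw [h3, Set.ncard_coe_finset, Nat.card_Iic]
  rw [hIic, Λ.card_inter hf i, hcompl] at hcard
  have hg : Λ.carrierᶜ.ncard = Λ.genus := rfl
  omega

lemma nu_split (Λ : NumericalSemigroup) {f : ℕ → ℕ} (hf : Λ.IsEnum f) (i : ℕ) :
    Λ.nu f i + {j : ℕ | j ≤ i ∧ f i - f j ∉ Λ.carrier}.ncard = i + 1 := by
  have hA : {j : ℕ | j ≤ i ∧ f i - f j ∈ Λ.carrier}.Finite :=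
    (Set.finite_Iic i).subset (fun j hj => hj.1)
  have hB : {j : ℕ | j ≤ i ∧ f i - f j ∉ Λ.carrier}.Finite :=
    (Set.finite_Iic i).subset (fun j hj => hj.1)
  have hdisj : Disjoint {j : ℕ | j ≤ i ∧ f i - f j ∈ Λ.carrier} {j : ℕ | j ≤ i ∧ f i - f j ∉ Λ.carrier} := by
    apply Set.disjoint_left.mpr
    rintro j ⟨-, h1⟩ ⟨-, h2⟩
    exact h2 h1
  have hunion : {j : ℕ | j ≤ i ∧ f i - f j ∈ Λ.carrier} ∪ {j : ℕ | j ≤ i ∧ f i - f j ∉ Λ.carrier} = Set.Iic i := by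
    ext j
    by_cases h : f i - f j ∈ Λ.carrier <;> simp [h, Set.mem_Iic]
  have hu := Set.ncard_union_eq hdisj hA hB
  rw [hunion] at hu
  have hIic : (Set.Iic i).ncard = i + 1 := by
    have h3 : (Set.Iic i) = ↑(Finset.Iic i) := by simp
    rw [h3, Set.ncard_coe_finset, Nat.card_Iic]
  unfold nu
  omega

lemma bad_card (Λ : NumericalSemigroup) {f : ℕ → ℕ} (hf : Λ.IsEnum f) (i : ℕ) :
    {j : ℕ | j ≤ i ∧ f i - f j ∉ Λ.carrier}.ncard
      = {ℓ : ℕ | ℓ ∉ Λ.carrier ∧ f i - ℓ ∈ Λ.carrier ∧ ℓ ≤ f i}.ncard := by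
  have himg : (fun j => f i - f j) '' {j : ℕ | j ≤ i ∧ f i - f j ∉ Λ.carrier}
      = {ℓ : ℕ | ℓ ∉ Λ.carrier ∧ f i - ℓ ∈ Λ.carrier ∧ ℓ ≤ f i} := by
    ext ℓ
    simp only [Set.mem_image, Set.mem_setOf_eq]
    constructor
    · rintro ⟨j, ⟨hj, hgap⟩, rfl⟩
      have hle : f j ≤ f i := hf.1.monotone hj
      refine ⟨hgap, ?_, by omega⟩
      have h4 : f i - (f i - f j) = f j := by omega
      rw [h4]
      exact hf.2 ▸ Set.mem_range_self j
    · rintro ⟨hgap, hmem, hle⟩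
      rw [← hf.2] at hmem
      obtain ⟨j, hj⟩ := hmem
      have hji : j ≤ i := (hf.1.le_iff_le).mp (by omega)
      refine ⟨j, ⟨hji, ?_⟩, by omega⟩
      have h4 : f i - f j = ℓ := by omega
      rw [h4]; exact hgap
  rw [← himg]
  rw [Set.ncard_image_of_injOn]
  intro j1 h1 j2 h2 heq
  have hl1 : f j1 ≤ f i := hf.1.monotone h1.1
  have hl2 : f j2 ≤ f i := hf.1.monotone h2.1
  have h5 : f j1 = f j2 := by simp only at heq; omega
  exact hf.1.injective h5

end NumericalSemigroup

theorem stmt16 (Λ : NumericalSemigroup) (f : ℕ → ℕ) (hf : Λ.IsEnum f)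
    (hnt : Λ.carrier ≠ Set.univ) :
    Λ.nu f (2 * Λ.conductor - Λ.genus - 2) = Λ.nu f (2 * Λ.conductor - Λ.genus - 2 + 1) ∧
    Λ.nu f (2 * Λ.conductor - Λ.genus - 2) + Λ.genus = (2 * Λ.conductor - Λ.genus - 2) + 2 := by
  set c := Λ.conductor with hc
  set g := Λ.genus with hg
  have h2 := Λ.two_le_conductor hnt
  have hg1 := Λ.one_le_genus hnt
  have hx0 : 2 * c - 2 ∈ Λ.carrier := Λ.conductor_spec _ (by omega)
  rw [← hf.2] at hx0; obtain ⟨k₀, hk0⟩ := hx0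
  have hx1 : 2 * c - 1 ∈ Λ.carrier := Λ.conductor_spec _ (by omega)
  rw [← hf.2] at hx1; obtain ⟨k₁, hk1⟩ := hx1
  have he0 : f k₀ = k₀ + g := Λ.index_eq hf k₀ (by omega)
  have he1 : f k₁ = k₁ + g := Λ.index_eq hf k₁ (by omega)
  have hkk : k₁ = k₀ + 1 := by omega
  have hkval : 2 * c - g - 2 = k₀ := by omega
  have hbad0 : {ℓ : ℕ | ℓ ∉ Λ.carrier ∧ f k₀ - ℓ ∈ Λ.carrier ∧ ℓ ≤ f k₀} = Λ.carrierᶜ \ {c - 1} := by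
    ext ℓ
    simp only [Set.mem_setOf_eq, Set.mem_diff, Set.mem_compl_iff, Set.mem_singleton_iff]
    constructor
    · rintro ⟨hgap, hmem, -⟩
      refine ⟨hgap, ?_⟩
      rintro rfl
      have heq : f k₀ - (c - 1) = c - 1 := by omega
      rw [heq] at hmem
      exact Λ.pred_not_mem hnt hmem
    · rintro ⟨hgap, hne⟩
      have hlt := Λ.gap_lt hgap
      exact ⟨hgap, Λ.conductor_spec _ (by omega), by omega⟩
  have hbad1 : {ℓ : ℕ | ℓ ∉ Λ.carrier ∧ f k₁ - ℓ ∈ Λ.carrier ∧ ℓ ≤ f k₁} = Λ.carrierᶜ := by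
    ext ℓ
    simp only [Set.mem_setOf_eq, Set.mem_compl_iff]
    constructor
    · rintro ⟨hgap, -, -⟩; exact hgap
    · intro hgap
      have hlt := Λ.gap_lt hgap
      exact ⟨hgap, Λ.conductor_spec _ (by omega), by omega⟩
  have hc0 := Λ.nu_split hf k₀
  have hc1 := Λ.nu_split hf k₁
  rw [Λ.bad_card hf, hbad0] at hc0
  rw [Λ.bad_card hf, hbad1] at hc1
  have hdcard : (Λ.carrierᶜ \ {c - 1}).ncard = Λ.carrierᶜ.ncard - 1 :=
    Set.ncard_diff_singleton_of_mem (s := Λ.carrierᶜ) (Λ.pred_not_mem hnt)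
  rw [hdcard] at hc0
  have hgg : Λ.carrierᶜ.ncard = g := rfl
  rw [hgg] at hc0 hc1
  rw [hkval]
  rw [hkk] at hc1
  constructor <;> omega
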